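/- Let p be an odd prime, q a prime power with p ∤ q, ρ = ord_p(q), β = ν_p(q^ρ - 1), and n = p^α with ρ ≠ 1. Then the number of monic irreducible factors of x^n - 1 over F_q of degree ρ equals (p^{min(α, β)} - 1)/ρ. -/

import Mathlib

open Polynomial UniqueFactorizationMonoid IntermediateField
open scoped Classical

section Aux

variable {F K : Type*} [Field F] [Fintype F] [Field K] [Algebra F K]

private lemma aux_pow_card (z : K) (hz : IsIntegral F z) :
    z ^ (Fintype.card F) ^ (minpoly F z).natDegree = z := by
  have hfd : FiniteDimensional F F⟮z⟯ := IntermediateField.adjoin.finiteDimensional hz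
  have hfin : Finite F⟮z⟯ := Module.finite_of_finite F
  have : Fintype F⟮z⟯ := Fintype.ofFinite _
  have hcard : Fintype.card F⟮z⟯ = Fintype.card F ^ (minpoly F z).natDegree := by
    rw [Module.card_eq_pow_finrank (K := F), IntermediateField.adjoin.finrank hz]
  have hg : (IntermediateField.AdjoinSimple.gen F z) ^ (Fintype.card F ^ (minpoly F z).natDegree)
      = IntermediateField.AdjoinSimple.gen F z := by
    rw [← hcard]; exact FiniteField.pow_card _
  have h2 := congrArg (algebraMap F⟮z⟯ K) hg
  rwa [map_pow, IntermediateField.AdjoinSimple.algebraMap_gen] at h2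

private lemma aux_minpoly_le (z : K) (hz : IsIntegral F z) {m : ℕ} (hm : 0 < m)
    (h : z ^ (Fintype.card F) ^ m = z) : (minpoly F z).natDegree ≤ m := by
  set q := Fintype.card F with hq
  have hq2 : 1 < q := Fintype.one_lt_card
  set c := ringChar F with hcdef
  haveI : CharP F c := ringChar.charP F
  have hcprime : c.Prime := CharP.char_is_prime F c
  haveI : Fact c.Prime := ⟨hcprime⟩
  haveI : CharP K c := charP_of_injective_algebraMap (algebraMap F K).injective c
  obtain ⟨s, -, hqc⟩ := FiniteField.card F c
  have hqm : q ^ m = c ^ ((s : ℕ) * m) := by rw [hq, hqc, ← pow_mul]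
  let S : Subfield K :=
  { carrier := {x : K | x ^ q ^ m = x}
    mul_mem' := fun {a b} ha hb => by
      simp only [Set.mem_setOf_eq] at *
      rw [mul_pow, ha, hb]
    one_mem' := one_pow _
    add_mem' := fun {a b} ha hb => by
      simp only [Set.mem_setOf_eq] at *
      rw [hqm, add_pow_char_pow, ← hqm, ha, hb]
    zero_mem' := zero_pow (by positivity)
    neg_mem' := fun {a} ha => by
      simp only [Set.mem_setOf_eq] at *
      rw [neg_pow, hqm, neg_one_pow_char_pow, ← hqm, ha, neg_one_mul]
    inv_mem' := fun a ha => by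
      simp only [Set.mem_setOf_eq] at *
      rw [inv_pow, ha] }
  have halg : ∀ x : F, algebraMap F K x ∈ S := fun x => by
    show (algebraMap F K x) ^ q ^ m = algebraMap F K x
    rw [← map_pow, FiniteField.pow_card_pow]
  let M : IntermediateField F K := S.toIntermediateField halg
  have hzM : z ∈ M := h
  have hle : F⟮z⟯ ≤ M := IntermediateField.adjoin_simple_le_iff.mpr hzM
  haveI hfd : FiniteDimensional F F⟮z⟯ := IntermediateField.adjoin.finiteDimensional hz
  haveI : Finite F⟮z⟯ := Module.finite_of_finite F
  haveI : Fintype F⟮z⟯ := Fintype.ofFinite _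
  have hcard : Fintype.card F⟮z⟯ = q ^ (minpoly F z).natDegree := by
    rw [Module.card_eq_pow_finrank (K := F), IntermediateField.adjoin.finrank hz]
  obtain ⟨g, hg⟩ := IsCyclic.exists_generator (α := F⟮z⟯ˣ)
  have horder : orderOf g = q ^ (minpoly F z).natDegree - 1 := by
    rw [orderOf_eq_card_of_forall_mem_zpowers hg, Nat.card_eq_fintype_card, Fintype.card_units, hcard]
  have hgfix : ((g : F⟮z⟯) : K) ^ q ^ m = ((g : F⟮z⟯) : K) := hle (g : F⟮z⟯).2
  have hgE : (g : F⟮z⟯) ^ q ^ m = (g : F⟮z⟯) := by exact_mod_cast hgfix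
  have hgu : g ^ q ^ m = g := Units.ext (by rw [Units.val_pow_eq_pow_val]; exact hgE)
  have hqm1 : 1 ≤ q ^ m := Nat.one_le_pow _ _ (by omega)
  have h1 : g ^ (q ^ m - 1) = 1 := by
    have h2 : g ^ (q ^ m - 1) * g = 1 * g := by
      rw [one_mul, ← pow_succ, Nat.sub_add_cancel hqm1]
      exact hgu
    exact mul_right_cancel h2
  have hdvd : orderOf g ∣ q ^ m - 1 := orderOf_dvd_of_pow_eq_one h1
  rw [horder] at hdvd
  have hqm2 : 2 ≤ q ^ m := Nat.one_lt_pow (by omega) hq2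
  have hle2 : q ^ (minpoly F z).natDegree - 1 ≤ q ^ m - 1 := Nat.le_of_dvd (by omega) hdvd
  have h1le : 1 ≤ q ^ (minpoly F z).natDegree := Nat.one_le_pow _ _ (by omega)
  have : q ^ (minpoly F z).natDegree ≤ q ^ m := by omega
  exact (Nat.pow_le_pow_iff_right hq2).mp this

end Aux

private lemma aux_card_filter_bind {γ δ : Type*} (s : Multiset γ) (t : γ → Multiset δ)
    (pr : δ → Prop) [DecidablePred pr] :
    Multiset.card ((s.bind t).filter pr)
      = (s.map (fun a => Multiset.card ((t a).filter pr))).sum := by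
  induction s using Multiset.induction_on with
  | empty => simp
  | cons a s ih => simp [Multiset.cons_bind, Multiset.filter_add, ih]

private lemma aux_sum_map_ite {γ : Type*} (s : Multiset γ) (pr : γ → Prop) [DecidablePred pr]
    (k : ℕ) :
    (s.map (fun a => if pr a then k else 0)).sum = k * Multiset.card (s.filter pr) := by
  induction s using Multiset.induction_on with
  | empty => simp
  | cons a s ih =>
    by_cases h : pr a
    · rw [Multiset.map_cons, Multiset.sum_cons, if_pos h, ih,
        Multiset.filter_cons_of_pos _ h, Multiset.card_cons, Nat.mul_succ]
      omega
    · rw [Multiset.map_cons, Multiset.sum_cons, if_neg h, ih,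
        Multiset.filter_cons_of_neg _ h, Nat.zero_add]

theorem stmt_12 {F : Type*} [Field F] [Fintype F] [DecidableEq F]
    (p α : ℕ) (hp : p.Prime) (hodd : Odd p)
    (hpq : ¬ p ∣ Fintype.card F) (ρ β : ℕ)
    (hρ : ρ = orderOf ((Fintype.card F : ZMod p)))
    (hβ : β = padicValNat p ((Fintype.card F) ^ ρ - 1))
    (hρ1 : ρ ≠ 1) :
    Multiset.card ((normalizedFactors (X ^ (p ^ α) - 1 : F[X])).filter
        (fun P => P.natDegree = ρ))
      = (p ^ (min α β) - 1) / ρ := by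
  haveI : Fact p.Prime := ⟨hp⟩
  set q := Fintype.card F with hq
  have hq2 : 1 < q := Fintype.one_lt_card
  have hx0 : (q : ZMod p) ≠ 0 := by
    simpa [ZMod.natCast_eq_zero_iff] using hpq
  have hfin : IsOfFinOrder ((q : ZMod p)) := by
    refine isOfFinOrder_iff_pow_eq_one.mpr ⟨p - 1, by have := hp.two_le; omega,
      ZMod.pow_card_sub_one_eq_one hx0⟩
  have hρ0 : 0 < ρ := hρ ▸ hfin.orderOf_pos
  have hpow1 : ((q : ZMod p)) ^ ρ = 1 := hρ ▸ pow_orderOf_eq_one _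
  have hqρ2 : 2 ≤ q ^ ρ := Nat.one_lt_pow (by omega) hq2
  have hpdvd : p ∣ q ^ ρ - 1 := by
    have h0 : ((q ^ ρ - 1 : ℕ) : ZMod p) = 0 := by
      rw [Nat.cast_sub (by omega : 1 ≤ q ^ ρ)]
      push_cast
      rw [hpow1, sub_self]
    exact (ZMod.natCast_eq_zero_iff _ _).mp h0
  have hβ1 : 1 ≤ β := by
    rw [hβ, ← Nat.factorization_def _ hp]
    exact (Nat.Prime.pow_dvd_iff_le_factorization hp (by omega)).mp (by simpa using hpdvd)
  set m := min α β with hm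
  -- the algebraic closure
  set K := AlgebraicClosure F with hK
  have hint : ∀ z : K, IsIntegral F z := fun z => (Algebra.IsAlgebraic.isAlgebraic z).isIntegral
  -- characteristic
  set c := ringChar F with hcdef
  haveI : CharP F c := ringChar.charP F
  have hcprime : c.Prime := CharP.char_is_prime F c
  haveI : CharP K c := charP_of_injective_algebraMap (algebraMap F K).injective c
  obtain ⟨s, -, hqc⟩ := FiniteField.card F c
  have hpc : (p : K) ≠ 0 := by
    rw [Ne, CharP.cast_eq_zero_iff K c p]
    intro hdvd
    have hcp : c = p := (Nat.prime_dvd_prime_iff_eq hcprime hp).mp hdvd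
    apply hpq
    rw [hq, hqc, ← hcp]
    exact dvd_pow_self c (by exact_mod_cast s.ne_zero)
  have hpK : ∀ j : ℕ, ((p ^ j : ℕ) : K) ≠ 0 := fun j => by
    push_cast
    exact pow_ne_zero _ hpc
  -- nth roots facts
  have hcard_nth : ∀ j : ℕ, Multiset.card (nthRoots (p ^ j) (1 : K)) = p ^ j := by
    intro j
    haveI : NeZero ((p ^ j : ℕ) : K) := ⟨hpK j⟩
    obtain ⟨ζ, hζ⟩ := HasEnoughRootsOfUnity.exists_primitiveRoot K (p ^ j)
    exact hζ.card_nthRoots_one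
  have hnodup_nth : ∀ j : ℕ, (nthRoots (p ^ j) (1 : K)).Nodup := by
    intro j
    haveI : NeZero ((p ^ j : ℕ) : K) := ⟨hpK j⟩
    obtain ⟨ζ, hζ⟩ := HasEnoughRootsOfUnity.exists_primitiveRoot K (p ^ j)
    exact hζ.nthRoots_one_nodup
  have hn0 : p ^ α ≠ 0 := pow_ne_zero _ hp.pos.ne'
  have hm0 : p ^ m ≠ 0 := pow_ne_zero _ hp.pos.ne'
  have ha : ∀ z : K, z ^ q ^ (minpoly F z).natDegree = z := fun z => aux_pow_card z (hint z)
  -- the key pointwise equivalence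
  have hiff : ∀ z : K, (z ^ p ^ α = 1 ∧ (minpoly F z).natDegree = ρ) ↔
      (z ^ p ^ m = 1 ∧ z ≠ 1) := by
    intro z
    constructor
    · rintro ⟨h1, h2⟩
      have hz0 : z ≠ 0 := by
        intro h0; rw [h0, zero_pow hn0] at h1; exact zero_ne_one h1
      obtain ⟨j, hjα, hord⟩ := (Nat.dvd_prime_pow hp).mp (orderOf_dvd_of_pow_eq_one h1)
      have hzq : z ^ q ^ ρ = z := by rw [← h2]; exact ha z
      have hdvdqρ : orderOf z ∣ q ^ ρ - 1 := by
        apply orderOf_dvd_of_pow_eq_one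
        have h3 : z ^ (q ^ ρ - 1) * z = 1 * z := by
          rw [one_mul, ← pow_succ, Nat.sub_add_cancel (by omega)]
          exact hzq
        exact mul_right_cancel₀ hz0 h3
      have hjβ : j ≤ β := by
        rw [hβ, ← Nat.factorization_def _ hp]
        exact (Nat.Prime.pow_dvd_iff_le_factorization hp (by omega)).mp (hord ▸ hdvdqρ)
      refine ⟨?_, ?_⟩
      · have hdvd : orderOf z ∣ p ^ m := hord ▸ pow_dvd_pow p (le_min hjα hjβ)
        exact orderOf_dvd_iff_pow_eq_one.mp hdvd
      · intro h1z
        rw [h1z] at h2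
        rw [minpoly.one] at h2
        have : ((X : F[X]) - 1).natDegree = 1 := by
          simpa using natDegree_X_sub_C (1 : F)
        omega
    · rintro ⟨h1, hz1⟩
      have hz0 : z ≠ 0 := by
        intro h0; rw [h0, zero_pow hm0] at h1; exact zero_ne_one h1
      obtain ⟨j, hjm, hord⟩ := (Nat.dvd_prime_pow hp).mp (orderOf_dvd_of_pow_eq_one h1)
      have hj1 : 1 ≤ j := by
        rcases Nat.eq_zero_or_pos j with h | h
        · exfalso; apply hz1; rw [h, pow_zero] at hord; exact orderOf_eq_one_iff.mp hord
        · exact h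
      have hα : z ^ p ^ α = 1 := by
        have hdvd : orderOf z ∣ p ^ α := hord ▸ pow_dvd_pow p (le_trans hjm (min_le_left _ _))
        exact orderOf_dvd_iff_pow_eq_one.mp hdvd
      have hpjq : p ^ j ∣ q ^ ρ - 1 :=
        dvd_trans (pow_dvd_pow p (le_trans hjm (min_le_right _ _)))
          (hβ ▸ pow_padicValNat_dvd)
      have hzq : z ^ q ^ ρ = z := by
        have hone : z ^ (q ^ ρ - 1) = 1 := orderOf_dvd_iff_pow_eq_one.mp (hord ▸ hpjq)
        calc z ^ q ^ ρ = z ^ (q ^ ρ - 1) * z := by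
              rw [← pow_succ, Nat.sub_add_cancel (by omega)]
          _ = z := by rw [hone, one_mul]
      have hdle : (minpoly F z).natDegree ≤ ρ := aux_minpoly_le z (hint z) hρ0 hzq
      have hd0 : 0 < (minpoly F z).natDegree := minpoly.natDegree_pos (hint z)
      have hdd : orderOf z ∣ q ^ (minpoly F z).natDegree - 1 := by
        apply orderOf_dvd_of_pow_eq_one
        have h3 : z ^ (q ^ (minpoly F z).natDegree - 1) * z = 1 * z := by
          rw [one_mul, ← pow_succ,
            Nat.sub_add_cancel (Nat.one_le_pow _ _ (by omega))]
          exact ha z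
        exact mul_right_cancel₀ hz0 h3
      have hpd : p ∣ q ^ (minpoly F z).natDegree - 1 := by
        refine dvd_trans ?_ hdd
        rw [hord]
        exact dvd_pow_self p (by omega)
      have hcast : ((q : ZMod p)) ^ (minpoly F z).natDegree = 1 := by
        have h1q : (1 : ℕ) ≤ q ^ (minpoly F z).natDegree := Nat.one_le_pow _ _ (by omega)
        have h0 : ((q ^ (minpoly F z).natDegree - 1 : ℕ) : ZMod p) = 0 :=
          (ZMod.natCast_eq_zero_iff _ _).mpr hpd
        rw [Nat.cast_sub h1q] at h0
        push_cast at h0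
        exact sub_eq_zero.mp h0
      have hρd : ρ ∣ (minpoly F z).natDegree := hρ ▸ orderOf_dvd_of_pow_eq_one hcast
      have : ρ ≤ (minpoly F z).natDegree := Nat.le_of_dvd hd0 hρd
      exact ⟨hα, by omega⟩
  -- translate the factor count into a root count
  set f : F[X] := X ^ p ^ α - 1 with hfdef
  have hfmonic : f.Monic := by
    have := monic_X_pow_sub_C (1 : F) hn0
    simpa [hfdef] using this
  have hf0 : f ≠ 0 := hfmonic.ne_zero
  have hProdMonic : ((normalizedFactors f).map id).prod.Monic := by
    apply monic_multiset_prod_of_monic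
    intro P hP
    show P.Monic
    rw [← normalize_normalized_factor P hP]
    exact monic_normalize (irreducible_of_normalized_factor P hP).ne_zero
  have hprod : (normalizedFactors f).prod = f := by
    refine eq_of_monic_of_associated ?_ hfmonic (prod_normalizedFactors hf0)
    simpa using hProdMonic
  have hmaproots : (nthRoots (p ^ α) (1 : K))
      = ((normalizedFactors f).map (Polynomial.map (algebraMap F K))).bind Polynomial.roots := by
    have h1 : nthRoots (p ^ α) (1 : K) = (f.map (algebraMap F K)).roots := by
      simp [nthRoots, hfdef, Polynomial.map_sub, Polynomial.map_pow, Polynomial.map_one]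
    rw [h1]
    have h2 : ((normalizedFactors f).prod).map (algebraMap F K)
        = ((normalizedFactors f).map (Polynomial.map (algebraMap F K))).prod := by
      simpa [Function.comp] using
        map_multiset_prod (Polynomial.mapRingHom (algebraMap F K)) (normalizedFactors f)
    conv_lhs => rw [← hprod, h2]
    apply roots_multiset_prod
    intro h0
    obtain ⟨P, hP, hPeq⟩ := Multiset.mem_map.mp h0
    exact (Polynomial.map_ne_zero (irreducible_of_normalized_factor P hP).ne_zero) hPeq
  have hper : ∀ P ∈ normalizedFactors f,
      Multiset.card ((Polynomial.map (algebraMap F K) P).roots.filter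
        (fun z => (minpoly F z).natDegree = ρ))
        = if P.natDegree = ρ then ρ else 0 := by
    intro P hP
    have hirr := irreducible_of_normalized_factor P hP
    have hmon : P.Monic := by
      rw [← normalize_normalized_factor P hP]
      exact monic_normalize hirr.ne_zero
    have hminpoly : ∀ z ∈ (Polynomial.map (algebraMap F K) P).roots, minpoly F z = P := by
      intro z hz
      have hz' : (Polynomial.aeval z) P = 0 := by
        have h3 := (Polynomial.mem_roots'.mp hz).2
        rwa [Polynomial.IsRoot, Polynomial.eval_map, ← Polynomial.aeval_def] at h3
      exact (minpoly.eq_of_irreducible_of_monic hirr hz' hmon).symm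
    have hcardroots : Multiset.card (Polynomial.map (algebraMap F K) P).roots = P.natDegree :=
      by rw [← (IsAlgClosed.splits (P.map (algebraMap F K))).natDegree_eq_card_roots, natDegree_map]
    by_cases hdeg : P.natDegree = ρ
    · have hall : Multiset.filter (fun z => (minpoly F z).natDegree = ρ)
          (Polynomial.map (algebraMap F K) P).roots
          = (Polynomial.map (algebraMap F K) P).roots :=
        Multiset.filter_eq_self.mpr (fun z hz => by rw [hminpoly z hz]; exact hdeg)
      rw [if_pos hdeg, hall, hcardroots]
      exact hdeg
    · rw [if_neg hdeg, Multiset.filter_eq_nil.mpr, Multiset.card_zero]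
      intro z hz hcontra
      exact hdeg (by rw [← hminpoly z hz]; exact hcontra)
  have hA : Multiset.card ((nthRoots (p ^ α) (1 : K)).filter
      (fun z => (minpoly F z).natDegree = ρ))
      = ρ * Multiset.card ((normalizedFactors f).filter (fun P => P.natDegree = ρ)) := by
    rw [hmaproots, aux_card_filter_bind, Multiset.map_map]
    have hmapeq : Multiset.map ((fun a => Multiset.card (Multiset.filter
        (fun z => (minpoly F z).natDegree = ρ) a.roots)) ∘ Polynomial.map (algebraMap F K))
        (normalizedFactors f)
        = Multiset.map (fun P => if P.natDegree = ρ then ρ else 0) (normalizedFactors f) :=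
      Multiset.map_congr rfl (fun P hP => hper P hP)
    rw [hmapeq]
    exact aux_sum_map_ite _ _ _
  -- identify the two filtered root multisets
  have hfilters : (nthRoots (p ^ α) (1 : K)).filter (fun z => (minpoly F z).natDegree = ρ)
      = (nthRoots (p ^ m) (1 : K)).filter (fun z => z ≠ 1) := by
    rw [Multiset.Nodup.ext ((hnodup_nth α).filter _) ((hnodup_nth m).filter _)]
    intro z
    simp only [Multiset.mem_filter, mem_nthRoots (pow_pos hp.pos _)]
    exact hiff z
  have hcardB : Multiset.card ((nthRoots (p ^ m) (1 : K)).filter (fun z => z ≠ 1))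
      = p ^ m - 1 := by
    rw [← Multiset.Nodup.erase_eq_filter 1 (hnodup_nth m),
      Multiset.card_erase_of_mem ((mem_nthRoots (pow_pos hp.pos _)).mpr (one_pow _)),
      hcard_nth m]
    rfl
  have hmain : ρ * Multiset.card ((normalizedFactors f).filter (fun P => P.natDegree = ρ))
      = p ^ m - 1 := by
    rw [← hA, hfilters, hcardB]
  exact (Nat.div_eq_of_eq_mul_left hρ0 (by rw [← hmain, mul_comm])).symm
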